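/- arXiv:2605.21516 — 3 statements merged into one kernel-verified Lean document; each statement's English description precedes it below -/
import Mathlib

section
/- Let (Ω, 𝒜, P) be a probability space, T a natural number, and for each stage t ∈ {1, …, T} let M_t ≥ 1 be a natural number and B_t an event; write B_{<t} := B₁ ∩ ⋯ ∩ B_{t−1} with B_{<1} = Ω. For each t and each m ∈ {1, …, M_t}, let Z_{t,m} : Ω → ℝ be a random variable, let μ_{t,m}⁻ ≤ μ_{t,m} ≤ μ_{t,m}⁺ be real numbers and σ_{t,m} > 0, and suppose that for all u ≥ 0, P({Z_{t,m} − μ_{t,m} ≥ u} ∩ B_{<t}) ≤ exp(−u²/(2σ_{t,m}²))·P(B_{<t}) and P({μ_{t,m} − Z_{t,m} ≥ u} ∩ B_{<t}) ≤ exp(−u²/(2σ_{t,m}²))·P(B_{<t}). Let ℓ_t ∈ ℝ, ε_t ≥ 0, η_t ≥ 0, and suppose the boundary-loss inequality P(B_t ∩ B_{<t}) ≤ exp(−η_t) · P((⋃_{m=1}^{M_t} {|Z_{t,m} − ℓ_t| ≤ ε_t}) ∩ B_{<t}) holds. Define a_{t,m} := ((dist(ℓ_t, [μ_{t,m}⁻,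 μ_{t,m}⁺]) − ε_t)₊)²/(2σ_{t,m}²) and ρ_t := min_{1 ≤ m ≤ M_t} a_{t,m}. Then P(⋂_{t=1}^T B_t) ≤ exp(−∑_{t=1}^T [η_t + (ρ_t − log M_t)₊]), where (x)₊ := max(x, 0). -/
open MeasureTheory
open scoped ENNReal



lemma per_m_bound {Ω : Type*} [MeasurableSpace Ω] (P : Measure Ω)
    (Z : Ω → ℝ) (μm μ μp σ ℓ ε : ℝ) (C : Set Ω)
    (h1 : μm ≤ μ) (h2 : μ ≤ μp) (hσ : 0 < σ) (hε : 0 ≤ ε)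
    (hup : ∀ u : ℝ, 0 ≤ u → P ({ω | Z ω - μ ≥ u} ∩ C) ≤
      ENNReal.ofReal (Real.exp (-(u ^ 2) / (2 * σ ^ 2))) * P C)
    (hlo : ∀ u : ℝ, 0 ≤ u → P ({ω | μ - Z ω ≥ u} ∩ C) ≤
      ENNReal.ofReal (Real.exp (-(u ^ 2) / (2 * σ ^ 2))) * P C) :
    P ({ω | |Z ω - ℓ| ≤ ε} ∩ C) ≤
      ENNReal.ofReal (Real.exp (-((max (Metric.infDist ℓ (Set.Icc μm μp) - ε) 0) ^ 2 /
        (2 * σ ^ 2)))) * P C := by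
  set d := Metric.infDist ℓ (Set.Icc μm μp) with hd
  rcases le_or_gt d ε with hle | hgt
  · have hmax : max (d - ε) 0 = 0 := max_eq_right (by linarith)
    rw [hmax]
    simp only [ne_eq, OfNat.ofNat_ne_zero, not_false_eq_true, zero_pow, zero_div, neg_zero,
      Real.exp_zero, ENNReal.ofReal_one, one_mul]
    exact measure_mono Set.inter_subset_right
  · have hd0 : 0 < d := lt_of_le_of_lt hε hgt
    have hmem : ℓ ∉ Set.Icc μm μp := by
      intro h
      have := Metric.infDist_zero_of_mem h
      rw [← hd] at this; linarith
    have hmax : max (d - ε) 0 = d - ε := max_eq_left (by linarith)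
    rw [hmax]
    have hu0 : (0:ℝ) ≤ d - ε := by linarith
    by_cases hcase : ℓ < μm
    · -- ℓ below the interval: use lower tail
      have hdle : d ≤ μm - ℓ := by
        have := Metric.infDist_le_dist_of_mem (x := ℓ)
          (Set.left_mem_Icc.2 (h1.trans h2))
        rw [← hd, Real.dist_eq, abs_of_nonpos (by linarith)] at this
        linarith
      have hsub : {ω | |Z ω - ℓ| ≤ ε} ∩ C ⊆ {ω | μ - Z ω ≥ d - ε} ∩ C := by
        intro ω ⟨hω, hC⟩
        refine ⟨?_, hC⟩
        have := abs_le.1 (show |Z ω - ℓ| ≤ ε from hω)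
        simp only [Set.mem_setOf_eq, ge_iff_le]
        linarith [this.2]
      calc P ({ω | |Z ω - ℓ| ≤ ε} ∩ C) ≤ P ({ω | μ - Z ω ≥ d - ε} ∩ C) := measure_mono hsub
        _ ≤ _ := by
            have := hlo (d - ε) hu0
            rwa [neg_div] at this
    · push_neg at hcase
      have hℓp : μp < ℓ := by
        by_contra h
        exact hmem ⟨hcase, by linarith⟩
      have hdle : d ≤ ℓ - μp := by
        have := Metric.infDist_le_dist_of_mem (x := ℓ)
          (Set.right_mem_Icc.2 (h1.trans h2))
        rw [← hd, Real.dist_eq, abs_of_nonneg (by linarith)] at this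
        linarith
      have hsub : {ω | |Z ω - ℓ| ≤ ε} ∩ C ⊆ {ω | Z ω - μ ≥ d - ε} ∩ C := by
        intro ω ⟨hω, hC⟩
        refine ⟨?_, hC⟩
        have := abs_le.1 (show |Z ω - ℓ| ≤ ε from hω)
        simp only [Set.mem_setOf_eq, ge_iff_le]
        linarith [this.1]
      calc P ({ω | |Z ω - ℓ| ≤ ε} ∩ C) ≤ P ({ω | Z ω - μ ≥ d - ε} ∩ C) := measure_mono hsub
        _ ≤ _ := by
            have := hup (d - ε) hu0
            rwa [neg_div] at this


lemma stage_union_bound {Ω : Type*} [MeasurableSpace Ω] (P : Measure Ω)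
    (A : ℕ → Set Ω) (C : Set Ω) (a : ℕ → ℝ) (Mt : ℕ) (hM : 1 ≤ Mt)
    (ha0 : ∀ m, 1 ≤ m → m ≤ Mt → 0 ≤ a m)
    (hbm : ∀ m, 1 ≤ m → m ≤ Mt → P (A m ∩ C) ≤ ENNReal.ofReal (Real.exp (-(a m))) * P C) :
    P ((⋃ m ∈ Finset.Icc 1 Mt, A m) ∩ C) ≤
      ENNReal.ofReal (Real.exp (-(max (sInf (a '' Set.Icc 1 Mt) - Real.log Mt) 0))) * P C := by
  set ρ := sInf (a '' Set.Icc 1 Mt) with hρdef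
  have hbdd : BddBelow (a '' Set.Icc 1 Mt) := by
    refine ⟨0, ?_⟩
    rintro x ⟨m, hm, rfl⟩
    exact ha0 m hm.1 hm.2
  have hρle : ∀ m, 1 ≤ m → m ≤ Mt → ρ ≤ a m := fun m h1 h2 =>
    csInf_le hbdd ⟨m, ⟨h1, h2⟩, rfl⟩
  rcases le_or_gt (ρ - Real.log Mt) 0 with hc | hc
  · rw [max_eq_right hc]
    simp only [neg_zero, Real.exp_zero, ENNReal.ofReal_one, one_mul]
    exact measure_mono Set.inter_subset_right
  · rw [max_eq_left hc.le]
    have hMpos : (0:ℝ) < Mt := by exact_mod_cast hM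
    have hexp : Real.exp (-(ρ - Real.log Mt)) = Mt * Real.exp (-ρ) := by
      rw [neg_sub, Real.exp_sub]  -- exp(log Mt - ρ)
      rw [Real.exp_log hMpos, Real.exp_neg]
      ring
    calc P ((⋃ m ∈ Finset.Icc 1 Mt, A m) ∩ C)
        = P (⋃ m ∈ Finset.Icc 1 Mt, (A m ∩ C)) := by rw [Set.iUnion₂_inter]
      _ ≤ ∑ m ∈ Finset.Icc 1 Mt, P (A m ∩ C) := measure_biUnion_finset_le _ _
      _ ≤ ∑ m ∈ Finset.Icc 1 Mt, ENNReal.ofReal (Real.exp (-ρ)) * P C := by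
          refine Finset.sum_le_sum fun m hm => ?_
          obtain ⟨h1, h2⟩ := Finset.mem_Icc.1 hm
          refine (hbm m h1 h2).trans (mul_le_mul_left ?_ _)
          exact ENNReal.ofReal_le_ofReal (Real.exp_le_exp.2 (neg_le_neg (hρle m h1 h2)))
      _ = (Mt : ℝ≥0∞) * (ENNReal.ofReal (Real.exp (-ρ)) * P C) := by
          rw [Finset.sum_const, Nat.card_Icc, Nat.add_sub_cancel, nsmul_eq_mul]
      _ = ENNReal.ofReal (Real.exp (-(ρ - Real.log Mt))) * P C := by
          rw [hexp, ENNReal.ofReal_mul hMpos.le, ENNReal.ofReal_natCast, mul_assoc]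

/-- Granularity–capability mismatch bound (deterministic-regime form): under
conditional sub-Gaussian concentration of the cumulative progress `Z t m` within the
controllability windows `[μm t m, μp t m]` and the boundary-loss inequality, the
probability of remaining recoverable through all `T` stages is at most
`exp (-∑ t, (η t + (ρ t - log (M t))₊))`, where
`ρ t = min_{1 ≤ m ≤ M t} ((dist (ℓ t) [μm t m, μp t m] - ε t)₊)² / (2 (σ t m)²)`. -/
theorem granularity_capability_mismatch_bound {Ω : Type*} [MeasurableSpace Ω]
    (P : Measure Ω) [IsProbabilityMeasure P]
    (T : ℕ) (M : ℕ → ℕ) (hM : ∀ t < T, 1 ≤ M t)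
    (B : ℕ → Set Ω) (Z : ℕ → ℕ → Ω → ℝ)
    (μm μ μp σ : ℕ → ℕ → ℝ) (ℓ ε η : ℕ → ℝ)
    (hμ1 : ∀ t < T, ∀ m, 1 ≤ m → m ≤ M t → μm t m ≤ μ t m)
    (hμ2 : ∀ t < T, ∀ m, 1 ≤ m → m ≤ M t → μ t m ≤ μp t m)
    (hσ : ∀ t < T, ∀ m, 1 ≤ m → m ≤ M t → 0 < σ t m)
    (hε : ∀ t < T, 0 ≤ ε t) (hη : ∀ t < T, 0 ≤ η t)
    (hup : ∀ t < T, ∀ m, 1 ≤ m → m ≤ M t → ∀ u : ℝ, 0 ≤ u →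
      P ({ω | Z t m ω - μ t m ≥ u} ∩ ⋂ s ∈ Finset.range t, B s) ≤
        ENNReal.ofReal (Real.exp (-(u ^ 2) / (2 * (σ t m) ^ 2))) *
          P (⋂ s ∈ Finset.range t, B s))
    (hlo : ∀ t < T, ∀ m, 1 ≤ m → m ≤ M t → ∀ u : ℝ, 0 ≤ u →
      P ({ω | μ t m - Z t m ω ≥ u} ∩ ⋂ s ∈ Finset.range t, B s) ≤
        ENNReal.ofReal (Real.exp (-(u ^ 2) / (2 * (σ t m) ^ 2))) *
          P (⋂ s ∈ Finset.range t, B s))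
    (hbd : ∀ t < T,
      P (B t ∩ ⋂ s ∈ Finset.range t, B s) ≤
        ENNReal.ofReal (Real.exp (-η t)) *
          P ((⋃ m ∈ Finset.Icc 1 (M t), {ω | |Z t m ω - ℓ t| ≤ ε t}) ∩
              ⋂ s ∈ Finset.range t, B s)) :
    P (⋂ t ∈ Finset.range T, B t) ≤
      ENNReal.ofReal (Real.exp (-(∑ t ∈ Finset.range T,
        (η t +
          max (sInf ((fun m : ℕ =>
              (max (Metric.infDist (ℓ t) (Set.Icc (μm t m) (μp t m)) - ε t) 0) ^ 2 /
                (2 * (σ t m) ^ 2)) '' Set.Icc 1 (M t)) - Real.log (M t)) 0)))) := by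
  -- per-stage bound
  set f : ℕ → ℝ := fun t =>
    η t + max (sInf ((fun m : ℕ =>
        (max (Metric.infDist (ℓ t) (Set.Icc (μm t m) (μp t m)) - ε t) 0) ^ 2 /
          (2 * (σ t m) ^ 2)) '' Set.Icc 1 (M t)) - Real.log (M t)) 0 with hf
  clear_value f
  have hstage : ∀ t < T,
      P (B t ∩ ⋂ s ∈ Finset.range t, B s) ≤
        ENNReal.ofReal (Real.exp (-f t)) * P (⋂ s ∈ Finset.range t, B s) := by
    intro t ht
    set C := ⋂ s ∈ Finset.range t, B s
    set a : ℕ → ℝ := fun m =>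
      (max (Metric.infDist (ℓ t) (Set.Icc (μm t m) (μp t m)) - ε t) 0) ^ 2 /
        (2 * (σ t m) ^ 2) with ha
    clear_value a
    have hU : P ((⋃ m ∈ Finset.Icc 1 (M t), {ω | |Z t m ω - ℓ t| ≤ ε t}) ∩ C) ≤
        ENNReal.ofReal (Real.exp (-(max (sInf (a '' Set.Icc 1 (M t)) - Real.log (M t)) 0))) *
          P C := by
      refine stage_union_bound P _ C a (M t) (hM t ht) ?_ ?_
      · intro m h1 h2
        have hσp := hσ t ht m h1 h2
        rw [ha]; dsimp only
        positivity
      · intro m h1 h2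
        have := per_m_bound P (Z t m) (μm t m) (μ t m) (μp t m) (σ t m) (ℓ t) (ε t) C
          (hμ1 t ht m h1 h2) (hμ2 t ht m h1 h2) (hσ t ht m h1 h2) (hε t ht)
          (fun u hu => hup t ht m h1 h2 u hu) (fun u hu => hlo t ht m h1 h2 u hu)
        simpa [ha] using this
    calc P (B t ∩ C) ≤ ENNReal.ofReal (Real.exp (-η t)) *
          P ((⋃ m ∈ Finset.Icc 1 (M t), {ω | |Z t m ω - ℓ t| ≤ ε t}) ∩ C) := hbd t ht
      _ ≤ ENNReal.ofReal (Real.exp (-η t)) *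
          (ENNReal.ofReal (Real.exp (-(max (sInf (a '' Set.Icc 1 (M t)) - Real.log (M t)) 0))) *
            P C) := mul_le_mul_right hU _
      _ = ENNReal.ofReal (Real.exp (-f t)) * P C := by
          rw [← mul_assoc, ← ENNReal.ofReal_mul (Real.exp_nonneg _), ← Real.exp_add]
          congr 2
          rw [hf]
          simp only
          rw [← ha]
          ring
  -- induction
  have main : ∀ n, n ≤ T →
      P (⋂ t ∈ Finset.range n, B t) ≤
        ENNReal.ofReal (Real.exp (-(∑ t ∈ Finset.range n, f t))) := by
    intro n
    induction n with
    | zero => intro _; simp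
    | succ k ih =>
      intro hk
      have hkT : k < T := hk
      have hkle : k ≤ T := hkT.le
      have hins : (⋂ t ∈ Finset.range (k+1), B t) = B k ∩ ⋂ t ∈ Finset.range k, B t := by
        rw [Finset.range_add_one, Finset.set_biInter_insert]
      rw [hins, Finset.sum_range_succ]
      calc P (B k ∩ ⋂ t ∈ Finset.range k, B t)
          ≤ ENNReal.ofReal (Real.exp (-f k)) * P (⋂ t ∈ Finset.range k, B t) :=
            hstage k hkT
        _ ≤ ENNReal.ofReal (Real.exp (-f k)) *
            ENNReal.ofReal (Real.exp (-(∑ t ∈ Finset.range k, f t))) :=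
            mul_le_mul_right (ih hkle) _
        _ = ENNReal.ofReal (Real.exp (-(∑ t ∈ Finset.range k, f t + f k))) := by
            rw [← ENNReal.ofReal_mul (Real.exp_nonneg _), ← Real.exp_add]
            congr 2
            ring
  exact main T le_rfl
end

section
/- Under the hypotheses of the granularity–capability mismatch bound, specialized as follows: each stage requests ℓ_t = L/T for a fixed L > 0, each stage has attempt budget M_t = M, controllability windows [μ_{t,m}⁻, μ_{t,m}⁺] = [m·r⁻, m·r⁺] and variances σ_{t,m}² = m·σ² for one-step window [r⁻, r⁺] and σ > 0, and constant tolerances ε_t = ε ≥ 0 and boundary losses η_t = η ≥ 0. Then P(⋂_{t=1}^T B_t) ≤ exp(−T·[η + (min_{1 ≤ m ≤ M} ((dist(L/T, [m·r⁻, m·r⁺]) − ε)₊)²/(2·m·σ²) − log M)₊]), where (x)₊ := max(x, 0). -/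
open MeasureTheory

/-- Uniform-decomposition corollary of the granularity–capability mismatch bound:
a task of total latent progress `L` split into `T` equal sub-goals of size `L/T`, with
cumulative controllability windows `[m·r⁻, m·r⁺]`, variances `m·σ²`, attempt budget `M`,
tolerance `ε` and boundary loss `η`, satisfies
`P (⋂ t, B t) ≤ exp (-T·(η + (ρ - log M)₊))` with
`ρ = min_{1 ≤ m ≤ M} ((dist (L/T) [m·r⁻, m·r⁺] - ε)₊)² / (2 m σ²)`. -/
theorem uniform_granularity_bound {Ω : Type*} [MeasurableSpace Ω]
    (P : Measure Ω) [IsProbabilityMeasure P]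
    (T : ℕ) (M : ℕ) (hM : 1 ≤ M)
    (B : ℕ → Set Ω) (Z : ℕ → ℕ → Ω → ℝ) (μ : ℕ → ℕ → ℝ)
    (L rm rp σ ε η : ℝ) (hL : 0 < L) (hr : rm ≤ rp) (hσ : 0 < σ) (hε : 0 ≤ ε) (hη : 0 ≤ η)
    (hμ1 : ∀ t < T, ∀ m, 1 ≤ m → m ≤ M → (m : ℝ) * rm ≤ μ t m)
    (hμ2 : ∀ t < T, ∀ m, 1 ≤ m → m ≤ M → μ t m ≤ (m : ℝ) * rp)
    (hup : ∀ t < T, ∀ m, 1 ≤ m → m ≤ M → ∀ u : ℝ, 0 ≤ u →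
      P ({ω | Z t m ω - μ t m ≥ u} ∩ ⋂ s ∈ Finset.range t, B s) ≤
        ENNReal.ofReal (Real.exp (-(u ^ 2) / (2 * (m : ℝ) * σ ^ 2))) *
          P (⋂ s ∈ Finset.range t, B s))
    (hlo : ∀ t < T, ∀ m, 1 ≤ m → m ≤ M → ∀ u : ℝ, 0 ≤ u →
      P ({ω | μ t m - Z t m ω ≥ u} ∩ ⋂ s ∈ Finset.range t, B s) ≤
        ENNReal.ofReal (Real.exp (-(u ^ 2) / (2 * (m : ℝ) * σ ^ 2))) *
          P (⋂ s ∈ Finset.range t, B s))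
    (hbd : ∀ t < T,
      P (B t ∩ ⋂ s ∈ Finset.range t, B s) ≤
        ENNReal.ofReal (Real.exp (-η)) *
          P ((⋃ m ∈ Finset.Icc 1 M, {ω | |Z t m ω - L / T| ≤ ε}) ∩
              ⋂ s ∈ Finset.range t, B s)) :
    P (⋂ t ∈ Finset.range T, B t) ≤
      ENNReal.ofReal (Real.exp (-((T : ℝ) *
        (η + max ((Finset.Icc 1 M).inf' (Finset.nonempty_Icc.mpr hM)
            (fun m : ℕ =>
              (max (Metric.infDist (L / T) (Set.Icc ((m : ℝ) * rm) ((m : ℝ) * rp)) - ε) 0) ^ 2 /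
                (2 * (m : ℝ) * σ ^ 2)) - Real.log M) 0)))) := by
  classical
  set f : ℕ → ℝ := fun m : ℕ =>
      (max (Metric.infDist (L / T) (Set.Icc ((m : ℝ) * rm) ((m : ℝ) * rp)) - ε) 0) ^ 2 /
        (2 * (m : ℝ) * σ ^ 2) with hf
  set ρ := (Finset.Icc 1 M).inf' (Finset.nonempty_Icc.mpr hM) f with hρdef
  set c := η + max (ρ - Real.log M) 0 with hcdef
  -- per-stage bound
  have stage : ∀ t, t < T →
      P (B t ∩ ⋂ s ∈ Finset.range t, B s) ≤
        ENNReal.ofReal (Real.exp (-c)) * P (⋂ s ∈ Finset.range t, B s) := by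
    intro t ht
    have key : ∀ m ∈ Finset.Icc 1 M,
        P ({ω | |Z t m ω - L / T| ≤ ε} ∩ ⋂ s ∈ Finset.range t, B s) ≤
          ENNReal.ofReal (Real.exp (-ρ)) * P (⋂ s ∈ Finset.range t, B s) := by
      intro m hmmem
      obtain ⟨hm1, hmM⟩ := Finset.mem_Icc.mp hmmem
      have hmR : (0:ℝ) < m := by exact_mod_cast hm1
      have hD : (0:ℝ) < 2 * (m:ℝ) * σ ^ 2 := by positivity
      set d := Metric.infDist (L / T) (Set.Icc ((m : ℝ) * rm) ((m : ℝ) * rp)) with hd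
      set u := max (d - ε) 0 with hu
      have hu0 : 0 ≤ u := le_max_right _ _
      have hfm : f m = u ^ 2 / (2 * (m:ℝ) * σ ^ 2) := rfl
      have hbound : P ({ω | |Z t m ω - L / T| ≤ ε} ∩ ⋂ s ∈ Finset.range t, B s) ≤
          ENNReal.ofReal (Real.exp (-(f m))) * P (⋂ s ∈ Finset.range t, B s) := by
        rcases eq_or_lt_of_le hu0 with h0 | hpos
        · have : f m = 0 := by rw [hfm, ← h0]; simp
          rw [this]
          simp only [neg_zero, Real.exp_zero, ENNReal.ofReal_one, one_mul]
          exact measure_mono Set.inter_subset_right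
        · have hdε : ε < d := by
            by_contra h
            push_neg at h
            have : u = 0 := max_eq_right (by linarith)
            rw [this] at hpos; exact lt_irrefl _ hpos
          have hule : u = d - ε := max_eq_left (by linarith)
          have hd0 : 0 < d := lt_of_le_of_lt hε hdε
          have hnotmem : L / T ∉ Set.Icc ((m:ℝ)*rm) ((m:ℝ)*rp) := by
            intro hmem
            have := Metric.infDist_zero_of_mem hmem
            rw [← hd] at this
            linarith
          rw [Set.mem_Icc, not_and_or, not_le, not_le] at hnotmem
          rcases hnotmem with hlt | hgt
          · -- L/T below the window: use lower tail
            have hmemL : ((m:ℝ)*rm) ∈ Set.Icc ((m:ℝ)*rm) ((m:ℝ)*rp) :=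
              Set.mem_Icc.mpr ⟨le_refl _, by nlinarith⟩
            have hdle : d ≤ (m:ℝ)*rm - L / T := by
              have h1 := Metric.infDist_le_dist_of_mem (x := L / T) hmemL
              rw [← hd, Real.dist_eq, abs_of_nonpos (by linarith)] at h1
              linarith
            have hsub : {ω | |Z t m ω - L / T| ≤ ε} ⊆ {ω | μ t m - Z t m ω ≥ u} := by
              intro ω hω
              simp only [Set.mem_setOf_eq] at hω ⊢
              have h1 : Z t m ω - L / T ≤ ε := (abs_le.mp hω).2
              have h2 : (m:ℝ) * rm ≤ μ t m := hμ1 t ht m hm1 hmM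
              rw [hule]; linarith
            calc P ({ω | |Z t m ω - L / T| ≤ ε} ∩ ⋂ s ∈ Finset.range t, B s)
                ≤ P ({ω | μ t m - Z t m ω ≥ u} ∩ ⋂ s ∈ Finset.range t, B s) :=
                  measure_mono (Set.inter_subset_inter_left _ hsub)
              _ ≤ ENNReal.ofReal (Real.exp (-(u ^ 2) / (2 * (m:ℝ) * σ ^ 2))) *
                    P (⋂ s ∈ Finset.range t, B s) := hlo t ht m hm1 hmM u hu0
              _ = ENNReal.ofReal (Real.exp (-(f m))) * P (⋂ s ∈ Finset.range t, B s) := by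
                  rw [hfm, neg_div]
          · -- L/T above the window: use upper tail
            have hmemR : ((m:ℝ)*rp) ∈ Set.Icc ((m:ℝ)*rm) ((m:ℝ)*rp) :=
              Set.mem_Icc.mpr ⟨by nlinarith, le_refl _⟩
            have hdle : d ≤ L / T - (m:ℝ)*rp := by
              have h1 := Metric.infDist_le_dist_of_mem (x := L / T) hmemR
              rw [← hd, Real.dist_eq, abs_of_nonneg (by linarith)] at h1
              linarith
            have hsub : {ω | |Z t m ω - L / T| ≤ ε} ⊆ {ω | Z t m ω - μ t m ≥ u} := by
              intro ω hω
              simp only [Set.mem_setOf_eq] at hω ⊢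
              have h1 : -(ε) ≤ Z t m ω - L / T := (abs_le.mp hω).1
              have h2 : μ t m ≤ (m:ℝ) * rp := hμ2 t ht m hm1 hmM
              rw [hule]; linarith
            calc P ({ω | |Z t m ω - L / T| ≤ ε} ∩ ⋂ s ∈ Finset.range t, B s)
                ≤ P ({ω | Z t m ω - μ t m ≥ u} ∩ ⋂ s ∈ Finset.range t, B s) :=
                  measure_mono (Set.inter_subset_inter_left _ hsub)
              _ ≤ ENNReal.ofReal (Real.exp (-(u ^ 2) / (2 * (m:ℝ) * σ ^ 2))) *
                    P (⋂ s ∈ Finset.range t, B s) := hup t ht m hm1 hmM u hu0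
              _ = ENNReal.ofReal (Real.exp (-(f m))) * P (⋂ s ∈ Finset.range t, B s) := by
                  rw [hfm, neg_div]
      have hρle : ρ ≤ f m := Finset.inf'_le f hmmem
      exact hbound.trans (mul_le_mul_left
        (ENNReal.ofReal_le_ofReal (Real.exp_le_exp.mpr (by linarith))) _)
    have hU1 : P ((⋃ m ∈ Finset.Icc 1 M, {ω | |Z t m ω - L / T| ≤ ε}) ∩
        ⋂ s ∈ Finset.range t, B s) ≤ P (⋂ s ∈ Finset.range t, B s) :=
      measure_mono Set.inter_subset_right
    have hU2 : P ((⋃ m ∈ Finset.Icc 1 M, {ω | |Z t m ω - L / T| ≤ ε}) ∩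
        ⋂ s ∈ Finset.range t, B s) ≤
        (M : ENNReal) * (ENNReal.ofReal (Real.exp (-ρ)) * P (⋂ s ∈ Finset.range t, B s)) := by
      rw [Set.iUnion₂_inter]
      calc P (⋃ m ∈ Finset.Icc 1 M, {ω | |Z t m ω - L / T| ≤ ε} ∩ ⋂ s ∈ Finset.range t, B s)
          ≤ ∑ m ∈ Finset.Icc 1 M,
              P ({ω | |Z t m ω - L / T| ≤ ε} ∩ ⋂ s ∈ Finset.range t, B s) :=
            measure_biUnion_finset_le _ _
        _ ≤ ∑ m ∈ Finset.Icc 1 M,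
              (ENNReal.ofReal (Real.exp (-ρ)) * P (⋂ s ∈ Finset.range t, B s)) :=
            Finset.sum_le_sum key
        _ = (M : ENNReal) * (ENNReal.ofReal (Real.exp (-ρ)) * P (⋂ s ∈ Finset.range t, B s)) := by
            rw [Finset.sum_const, Nat.card_Icc]
            simp [nsmul_eq_mul]
    have hfinish : P ((⋃ m ∈ Finset.Icc 1 M, {ω | |Z t m ω - L / T| ≤ ε}) ∩
        ⋂ s ∈ Finset.range t, B s) ≤
        ENNReal.ofReal (Real.exp (-(max (ρ - Real.log M) 0))) *
          P (⋂ s ∈ Finset.range t, B s) := by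
      rcases le_or_gt ρ (Real.log M) with h | h
      · rw [max_eq_right (by linarith)]
        simpa using hU1
      · rw [max_eq_left (by linarith)]
        refine hU2.trans (le_of_eq ?_)
        have hMpos : (0:ℝ) < M := by exact_mod_cast Nat.lt_of_lt_of_le Nat.zero_lt_one hM
        rw [← mul_assoc]
        congr 1
        rw [← ENNReal.ofReal_natCast, ← ENNReal.ofReal_mul (by positivity)]
        congr 1
        rw [show -(ρ - Real.log M) = Real.log M + (-ρ) by ring, Real.exp_add,
          Real.exp_log hMpos]
    calc P (B t ∩ ⋂ s ∈ Finset.range t, B s)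
        ≤ ENNReal.ofReal (Real.exp (-η)) *
            P ((⋃ m ∈ Finset.Icc 1 M, {ω | |Z t m ω - L / T| ≤ ε}) ∩
              ⋂ s ∈ Finset.range t, B s) := hbd t ht
      _ ≤ ENNReal.ofReal (Real.exp (-η)) *
            (ENNReal.ofReal (Real.exp (-(max (ρ - Real.log M) 0))) *
              P (⋂ s ∈ Finset.range t, B s)) := mul_le_mul_right hfinish _
      _ = ENNReal.ofReal (Real.exp (-c)) * P (⋂ s ∈ Finset.range t, B s) := by
          rw [← mul_assoc, ← ENNReal.ofReal_mul (Real.exp_nonneg _), ← Real.exp_add]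
          congr 2
          rw [hcdef]; ring
  -- induction over stages
  have main : ∀ n, n ≤ T →
      P (⋂ t ∈ Finset.range n, B t) ≤ ENNReal.ofReal (Real.exp (-c)) ^ n := by
    intro n
    induction n with
    | zero => intro _; simp
    | succ k ih =>
      intro hk
      have hkT : k < T := hk
      have h1 : (⋂ t ∈ Finset.range (k+1), B t) = B k ∩ ⋂ t ∈ Finset.range k, B t := by
        rw [Finset.range_add_one, Finset.set_biInter_insert]
      rw [h1, pow_succ']
      exact (stage k hkT).trans (mul_le_mul_right (ih (le_of_lt hkT)) _)
  refine (main T le_rfl).trans (le_of_eq ?_)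
  rw [← ENNReal.ofReal_pow (Real.exp_nonneg _), ← Real.exp_nat_mul]
  congr 2
  ring
end

section
/- Let (Ω, 𝒜, Q₀) be a probability space, W : Ω → ℝ a nonnegative integrable function with 0 < ∫ W dQ₀ < ∞, and R ∈ 𝒜 with 0 < Q₀(R) < 1. Define the filtered probability measure Q_W(A) := (∫_A W dQ₀)/(∫ W dQ₀), the conditional average weights W̄_R := (∫_R W dQ₀)/Q₀(R) and W̄_{Rᶜ} := (∫_{Rᶜ} W dQ₀)/Q₀(Rᶜ), assumed to satisfy 0 < W̄_R < ∞ and 0 < W̄_{Rᶜ} < ∞, the base log-odds ω₀ := log(Q₀(R)/Q₀(Rᶜ)), and the retention gap Γ := log W̄_R − log W̄_{Rᶜ}. Let γ ≥ 0. If Γ ≥ γ then Q_W(R) ≥ σ(ω₀ + γ), and if Γ ≤ −γ then Q_W(R) ≤ σ(ω₀ − γ), where σ(u) := 1/(1 + e^{−u}) is the logistic sigmoid. -/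
open MeasureTheory

/-- Quantitative guidance–action-space alignment: if the retention gap satisfies
`Γ ≥ γ` then `Q_W(R) ≥ σ(ω₀ + γ)`, and if `Γ ≤ -γ` then `Q_W(R) ≤ σ(ω₀ - γ)`,
where `σ(u) = 1/(1 + e^{-u})` is the logistic sigmoid. -/
theorem guidance_alignment_quantitative {Ω : Type*} [MeasurableSpace Ω]
    (Q : Measure Ω) [IsProbabilityMeasure Q]
    (W : Ω → ℝ) (hW0 : ∀ ω, 0 ≤ W ω) (hWint : Integrable W Q)
    (hWpos : 0 < ∫ ω, W ω ∂Q)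
    (R : Set Ω) (hR : MeasurableSet R) (hR0 : 0 < Q R) (hR1 : Q R < 1)
    (QW : Set Ω → ℝ)
    (hQW : ∀ A : Set Ω, QW A = (∫ ω in A, W ω ∂Q) / ∫ ω, W ω ∂Q)
    (WR WRc : ℝ)
    (hWR : WR = (∫ ω in R, W ω ∂Q) / (Q R).toReal)
    (hWRc : WRc = (∫ ω in Rᶜ, W ω ∂Q) / (Q Rᶜ).toReal)
    (hWRpos : 0 < WR) (hWRcpos : 0 < WRc)
    (ω₀ Γ : ℝ)
    (hω₀ : ω₀ = Real.log ((Q R).toReal / (Q Rᶜ).toReal))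
    (hΓ : Γ = Real.log WR - Real.log WRc)
    (γ : ℝ) (hγ : 0 ≤ γ) :
    (Γ ≥ γ → QW R ≥ 1 / (1 + Real.exp (-(ω₀ + γ)))) ∧
    (Γ ≤ -γ → QW R ≤ 1 / (1 + Real.exp (-(ω₀ - γ)))) := by
  set p := (Q R).toReal with hp
  set q := (Q Rᶜ).toReal with hq
  have hppos : 0 < p := ENNReal.toReal_pos hR0.ne' (measure_ne_top Q R)
  have hqpos : 0 < q := by
    have hc : 0 < Q Rᶜ := by
      rw [prob_compl_eq_one_sub hR]
      exact tsub_pos_of_lt hR1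
    exact ENNReal.toReal_pos hc.ne' (measure_ne_top Q Rᶜ)
  set a := ∫ ω in R, W ω ∂Q with ha
  set b := ∫ ω in Rᶜ, W ω ∂Q with hb
  have hsplit : ∫ ω, W ω ∂Q = a + b := (integral_add_compl hR hWint).symm
  have haWR : a = WR * p := by
    rw [hWR]; field_simp
  have hbWRc : b = WRc * q := by
    rw [hWRc]; field_simp
  have hapos : 0 < a := haWR ▸ mul_pos hWRpos hppos
  have hbpos : 0 < b := hbWRc ▸ mul_pos hWRcpos hqpos
  have hexpω₀ : Real.exp ω₀ = p / q := by
    rw [hω₀, Real.exp_log (div_pos hppos hqpos)]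
  have hexpΓ : Real.exp Γ = WR / WRc := by
    rw [hΓ, Real.exp_sub, Real.exp_log hWRpos, Real.exp_log hWRcpos]
  have heγ : 0 < Real.exp γ := Real.exp_pos γ
  constructor
  · intro hge
    have hkey : WRc * Real.exp γ ≤ WR := by
      have h1 : Real.exp γ ≤ WR / WRc := by
        rw [← hexpΓ]; exact Real.exp_le_exp.mpr hge
      calc WRc * Real.exp γ ≤ WRc * (WR / WRc) := by
            exact mul_le_mul_of_nonneg_left h1 hWRcpos.le
        _ = WR := by field_simp
    have hkey2 : b * p * Real.exp γ ≤ a * q := by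
      rw [haWR, hbWRc]; nlinarith [mul_pos hppos hqpos]
    have hE : Real.exp (-(ω₀ + γ)) = q / (p * Real.exp γ) := by
      rw [Real.exp_neg, Real.exp_add, hexpω₀]
      field_simp
    rw [hQW, hsplit, hE, ge_iff_le,
      div_le_div_iff₀ (by positivity) (by positivity)]
    have hR' : (∫ ω in R, W ω ∂Q) = a := rfl
    have expand : a * (1 + q / (p * Real.exp γ)) = a + a * q / (p * Real.exp γ) := by
      ring
    rw [hR', expand, one_mul]
    have h3 : b ≤ a * q / (p * Real.exp γ) := by
      rw [le_div_iff₀ (by positivity)]; nlinarith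
    linarith
  · intro hle
    have hkey : WR * Real.exp γ ≤ WRc := by
      have h1 : Real.exp Γ ≤ Real.exp (-γ) := Real.exp_le_exp.mpr hle
      rw [hexpΓ, Real.exp_neg] at h1
      have h2 : WR / WRc * Real.exp γ ≤ (Real.exp γ)⁻¹ * Real.exp γ :=
        mul_le_mul_of_nonneg_right h1 heγ.le
      rw [inv_mul_cancel₀ heγ.ne'] at h2
      calc WR * Real.exp γ = WR / WRc * Real.exp γ * WRc := by field_simp
        _ ≤ 1 * WRc := mul_le_mul_of_nonneg_right h2 hWRcpos.le
        _ = WRc := one_mul _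
    have hkey2 : a * q * Real.exp γ ≤ b * p := by
      rw [haWR, hbWRc]; nlinarith [mul_pos hppos hqpos]
    have hE : Real.exp (-(ω₀ - γ)) = q * Real.exp γ / p := by
      rw [neg_sub, Real.exp_sub, hexpω₀]
      field_simp
    rw [hQW, hsplit, hE,
      div_le_div_iff₀ (by positivity) (by positivity)]
    have hR' : (∫ ω in R, W ω ∂Q) = a := rfl
    have expand : a * (1 + q * Real.exp γ / p) = a + a * q * Real.exp γ / p := by ring
    rw [hR', expand, one_mul]
    have h3 : a * q * Real.exp γ / p ≤ b := by
      rw [div_le_iff₀ hppos]; nlinarith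
    linarith
end
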